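/- Let n ≥ 1 and let s be a natural number with s + 1 ≤ n. Let W be a finite set of nonzero linear functionals on ℝⁿ that contains all n coordinate functionals. Let κ ⊆ ℝⁿ be an intersection of finitely many open halfspaces of the form {x : A(x) > b} with A ∈ W and b ∈ ℝ. Let S be the set of linear maps F : ℝⁿ → ℝ^{s+1} whose s + 1 component functionals form a linearly independent family of elements of W. Then κ = ⋂_{F ∈ S} F⁻¹(F(κ)), where F(κ) denotes the image of κ under F. -/

import Mathlib

/-- The coordinate functionals span the dual of `ℝⁿ`. -/
lemma span_proj_top (n : ℕ) :
    Submodule.span ℝ (Set.range fun i : Fin n =>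
      (LinearMap.proj i : (Fin n → ℝ) →ₗ[ℝ] ℝ)) = ⊤ := by
  rw [Submodule.eq_top_iff']
  intro φ
  have hφ : φ = ∑ i : Fin n, φ (Pi.single i 1) •
      (LinearMap.proj i : (Fin n → ℝ) →ₗ[ℝ] ℝ) := by
    apply Module.Basis.ext (Pi.basisFun ℝ (Fin n))
    intro i
    simp [Pi.basisFun_apply, LinearMap.proj_apply, Pi.single_apply,
      Finset.sum_ite_eq]
  rw [hφ]
  exact Submodule.sum_mem _ fun i _ =>
    Submodule.smul_mem _ _ (Submodule.subset_span ⟨i, rfl⟩)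

/-- Any nonzero functional in `W` extends to a linearly independent family of
`s+1` elements of `W`, with the given functional first. -/
lemma exists_indep_family (n s : ℕ) (hs : s + 1 ≤ n)
    (W : Finset ((Fin n → ℝ) →ₗ[ℝ] ℝ))
    (hWcoord : ∀ i : Fin n, (LinearMap.proj i : (Fin n → ℝ) →ₗ[ℝ] ℝ) ∈ W)
    (A : (Fin n → ℝ) →ₗ[ℝ] ℝ) (hA : A ∈ W) (hA0 : A ≠ 0) :
    ∃ f : Fin (s + 1) → ((Fin n → ℝ) →ₗ[ℝ] ℝ),
      f 0 = A ∧ (∀ j, f j ∈ W) ∧ LinearIndependent ℝ f := by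
  classical
  set t : Set ((Fin n → ℝ) →ₗ[ℝ] ℝ) :=
    {A} ∪ Set.range (fun i : Fin n => (LinearMap.proj i : (Fin n → ℝ) →ₗ[ℝ] ℝ))
  have hli : LinearIndepOn ℝ id ({A} : Set ((Fin n → ℝ) →ₗ[ℝ] ℝ)) :=
    LinearIndepOn.singleton hA0
  have hst : ({A} : Set ((Fin n → ℝ) →ₗ[ℝ] ℝ)) ⊆ t := Set.subset_union_left
  set b := hli.extend hst with hb
  have hbt : b ⊆ t := hli.extend_subset hst
  have hAb : A ∈ b := hli.subset_extend hst rfl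
  have hbW : b ⊆ ↑W := by
    refine hbt.trans ?_
    rintro x (rfl | ⟨i, rfl⟩)
    · exact hA
    · exact hWcoord i
  have hbli : LinearIndependent ℝ (Subtype.val : b → (Fin n → ℝ) →ₗ[ℝ] ℝ) :=
    hli.linearIndepOn_extend hst
  have hspan : Submodule.span ℝ b = ⊤ := by
    rw [hli.span_extend_eq_span hst]
    rw [Submodule.eq_top_iff']
    intro φ
    have := (span_proj_top n).ge (Submodule.mem_top (x := φ))
    exact Submodule.span_mono Set.subset_union_right this
  have hbfin : b.Finite := hbli.setFinite
  haveI : Fintype b := hbfin.fintype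
  have hbasis : Module.Basis b ℝ ((Fin n → ℝ) →ₗ[ℝ] ℝ) :=
    Module.Basis.mk hbli (by rw [Subtype.range_coe, hspan])
  have hcard : Fintype.card b = n := by
    have h1 := Module.finrank_eq_card_basis hbasis
    have h2 : Module.finrank ℝ ((Fin n → ℝ) →ₗ[ℝ] ℝ) = n := by
      rw [Module.finrank_linearMap]
      simp
    omega
  obtain e := (Fintype.equivFinOfCardEq hcard).symm
  set g : Fin (s + 1) → b := fun j =>
    Equiv.swap (e ⟨0, by omega⟩) ⟨A, hAb⟩ (e (Fin.castLE hs j))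
  have hginj : Function.Injective g := by
    intro j k hjk
    have := (Equiv.swap (e ⟨0, by omega⟩) ⟨A, hAb⟩).injective hjk
    have := e.injective this
    exact Fin.castLE_injective hs this
  refine ⟨fun j => ((g j : b) : (Fin n → ℝ) →ₗ[ℝ] ℝ), ?_, fun j => hbW (g j).2,
    hbli.comp g hginj⟩
  show ((Equiv.swap (e ⟨0, by omega⟩) ⟨A, hAb⟩ (e (Fin.castLE hs 0)) : b) : _) = A
  have h0 : Fin.castLE hs (0 : Fin (s + 1)) = ⟨0, by omega⟩ := rfl
  rw [h0, Equiv.swap_apply_left]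

theorem stratum_determined_by_projections
    (n s : ℕ) (hn : 1 ≤ n) (hs : s + 1 ≤ n)
    (W : Finset ((Fin n → ℝ) →ₗ[ℝ] ℝ))
    (hW0 : ∀ A ∈ W, A ≠ 0)
    (hWcoord : ∀ i : Fin n, (LinearMap.proj i : (Fin n → ℝ) →ₗ[ℝ] ℝ) ∈ W)
    (κ : Set (Fin n → ℝ))
    (T : Finset (((Fin n → ℝ) →ₗ[ℝ] ℝ) × ℝ))
    (hT : ∀ p ∈ T, p.1 ∈ W)
    (hκ : κ = ⋂ p ∈ T, {x : Fin n → ℝ | p.2 < p.1 x}) :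
    κ = ⋂ F ∈ {F : (Fin n → ℝ) →ₗ[ℝ] (Fin (s + 1) → ℝ) |
        (∀ j : Fin (s + 1), (LinearMap.proj j).comp F ∈ W) ∧
        LinearIndependent ℝ fun j : Fin (s + 1) => (LinearMap.proj j).comp F},
      F ⁻¹' (F '' κ) := by
  apply Set.Subset.antisymm
  · intro x hx
    exact Set.mem_iInter₂.mpr fun F _ => ⟨x, hx, rfl⟩
  · intro x hx
    rw [hκ]
    refine Set.mem_iInter₂.mpr fun p hp => ?_
    have hA : p.1 ∈ W := hT p hp
    have hA0 : p.1 ≠ 0 := hW0 _ hA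
    obtain ⟨f, hf0, hfW, hfi⟩ := exists_indep_family n s hs W hWcoord p.1 hA hA0
    set F : (Fin n → ℝ) →ₗ[ℝ] (Fin (s + 1) → ℝ) := LinearMap.pi f with hF
    have hcomp : (fun j : Fin (s + 1) => (LinearMap.proj j).comp F) = f := by
      funext j; exact LinearMap.proj_pi f j
    have hFS : F ∈ {F : (Fin n → ℝ) →ₗ[ℝ] (Fin (s + 1) → ℝ) |
        (∀ j : Fin (s + 1), (LinearMap.proj j).comp F ∈ W) ∧
        LinearIndependent ℝ fun j : Fin (s + 1) => (LinearMap.proj j).comp F} := by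
      constructor
      · intro j
        rw [show (LinearMap.proj j).comp F = f j from congrFun hcomp j]
        exact hfW j
      · rw [hcomp]; exact hfi
    obtain ⟨y, hy, hFy⟩ := Set.mem_iInter₂.mp hx F hFS
    have hpy : p.1 y = p.1 x := by
      have := congrFun hFy 0
      simpa [hF, LinearMap.pi_apply, hf0] using this
    have hyT : y ∈ ⋂ q ∈ T, {x : Fin n → ℝ | q.2 < q.1 x} := hκ ▸ hy
    have := Set.mem_iInter₂.mp hyT p hp
    simpa [← hpy] using this
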